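/- For every formal Fourier series f and integer n ≥ 1, the operator norm of the truncated branching-Toeplitz matrix dominates that of the standard Toeplitz matrix: ‖T_n(f)‖ ≤ ‖Γ_q^{(n)}[f]‖, where T_n(f) = [\hat{f}(k-l)]_{0 ≤ k,l ≤ n}. -/
import Mathlib

/-- Vertices of the rooted `q`-homogeneous tree, modelled as words over `Fin q`;
the root is the empty word and the children of `w` are the words `k :: w`. -/
abbrev Vertex (q : ℕ) := List (Fin q)

/-- `σ` is an ancestor of `τ` (i.e. `σ ⪯ τ`): `τ = w ++ σ` for some word `w`. -/
def Anc {q : ℕ} (σ τ : Vertex q) : Prop := σ <:+ τ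

/-- Two vertices are comparable (`(σ,τ) ∈ 𝒞`) if one is an ancestor of the other. -/
def Comp {q : ℕ} (σ τ : Vertex q) : Prop := σ <:+ τ ∨ τ <:+ σ

/-- Length of the longest common suffix, i.e. the generation of the last common
ancestor of the two vertices. -/
def lcs {q : ℕ} (σ τ : Vertex q) : ℕ :=
  ((σ.reverse.zip τ.reverse).takeWhile (fun p => decide (p.1 = p.2))).length

/-- The graph distance on the rooted `q`-homogeneous tree. -/
def tdist {q : ℕ} (σ τ : Vertex q) : ℕ := (σ.length - lcs σ τ) + (τ.length - lcs σ τ)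

instance {q : ℕ} (σ τ : Vertex q) : Decidable (Comp σ τ) :=
  inferInstanceAs (Decidable (σ <:+ τ ∨ τ <:+ σ))

/-- The branching-Toeplitz kernel
`Γ_q[f](σ₁,σ₂) = q^{-d(σ₁,σ₂)/2} · f̂(|σ₁|-|σ₂|) · 1_𝒞(σ₁,σ₂)` associated with a
formal Fourier series with coefficients `f̂ : ℤ → ℂ`. -/
noncomputable def btKer {q : ℕ} (f : ℤ → ℂ) (σ₁ σ₂ : Vertex q) : ℂ :=
  if Comp σ₁ σ₂ then
    ((q : ℝ) ^ (-(tdist σ₁ σ₂ : ℝ) / 2) : ℝ) * f ((σ₁.length : ℤ) - σ₂.length) else 0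

/-- The ball `B_n(T_q)` of vertices of generation at most `n`. -/
abbrev Ball (q n : ℕ) := {σ : Vertex q // σ.length ≤ n}

noncomputable instance (q n : ℕ) : Fintype (Ball q n) :=
  (List.finite_length_le (Fin q) n).fintype

/-- The truncated branching-Toeplitz matrix `Γ_q^{(n)}[f]` on `B_n(T_q)`. -/
noncomputable def btMat (q n : ℕ) (f : ℤ → ℂ) : Matrix (Ball q n) (Ball q n) ℂ :=
  fun σ₁ σ₂ => btKer f σ₁.1 σ₂.1

/-- The standard Toeplitz matrix `T_n(f) = [f̂(k-l)]_{0 ≤ k,l ≤ n}`. -/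
def toepMat (n : ℕ) (f : ℤ → ℂ) : Matrix (Fin (n + 1)) (Fin (n + 1)) ℂ :=
  fun k l => f ((k : ℤ) - (l : ℤ))

open Matrix

/-! ### Auxiliary list lemmas -/

lemma tw_zip_left {α : Type*} [DecidableEq α] (a b : List α) :
    (((a ++ b).zip a).takeWhile (fun p => decide (p.1 = p.2))).length = a.length := by
  induction a with
  | nil => simp
  | cons x t ih => simp [List.takeWhile_cons, ih]

lemma tw_zip_comm {α : Type*} [DecidableEq α] (a b : List α) :
    ((a.zip b).takeWhile (fun p => decide (p.1 = p.2))).length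
      = ((b.zip a).takeWhile (fun p => decide (p.1 = p.2))).length := by
  induction a generalizing b with
  | nil => simp
  | cons x t ih =>
    cases b with
    | nil => simp
    | cons y s =>
      by_cases h : x = y
      · subst h; simp [List.takeWhile_cons, ih]
      · simp [List.takeWhile_cons, h, Ne.symm h]

lemma lcs_of_suffix {q : ℕ} {σ τ : Vertex q} (h : τ <:+ σ) : lcs σ τ = τ.length := by
  obtain ⟨w, rfl⟩ := h
  simpa [lcs, List.reverse_append] using tw_zip_left τ.reverse w.reverse

lemma lcs_comm {q : ℕ} (σ τ : Vertex q) : lcs σ τ = lcs τ σ := tw_zip_comm _ _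

lemma tdist_comm {q : ℕ} (σ τ : Vertex q) : tdist σ τ = tdist τ σ := by
  unfold tdist; rw [lcs_comm, add_comm]

lemma suffix_eq_drop {q : ℕ} {σ τ : Vertex q} (h : τ <:+ σ) :
    τ = σ.drop (σ.length - τ.length) := by
  obtain ⟨w, rfl⟩ := h
  simp

lemma tdist_of_suffix {q : ℕ} {σ τ : Vertex q} (h : τ <:+ σ) :
    tdist σ τ = σ.length - τ.length := by
  unfold tdist; rw [lcs_of_suffix h]; omega

lemma comp_symm {q : ℕ} {σ τ : Vertex q} (h : Comp σ τ) : Comp τ σ := h.symm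

lemma btKer_flip {q : ℕ} (f : ℤ → ℂ) (σ τ : Vertex q) :
    btKer f σ τ = btKer (fun m => f (-m)) τ σ := by
  unfold btKer
  by_cases h : Comp σ τ
  · rw [if_pos h, if_pos (comp_symm h), tdist_comm τ σ]
    congr 1
    ring_nf
  · rw [if_neg h, if_neg (fun h' => h (comp_symm h'))]

/-! ### The isometric embedding -/

/-- entries of the isometry `V : ℂ^{n+1} → ℂ^{B_n}` -/
noncomputable def Vc (q : ℕ) (σ : Vertex q) (k : ℕ) : ℂ :=
  if σ.length = k then (((q : ℝ) ^ (-(k : ℝ) / 2) : ℝ) : ℂ) else 0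

lemma star_Vc (q : ℕ) (σ : Vertex q) (k : ℕ) : star (Vc q σ k) = Vc q σ k := by
  unfold Vc; split <;> simp [Complex.star_def, Complex.conj_ofReal]

noncomputable def Vm (q n : ℕ) : Matrix (Ball q n) (Fin (n + 1)) ℂ :=
  fun σ k => Vc q σ.1 (k : ℕ)

def ballEquiv (q n k : ℕ) (hk : k ≤ n) :
    {σ : Ball q n // σ.1.length = k} ≃ List.Vector (Fin q) k where
  toFun σ := ⟨σ.1.1, σ.2⟩
  invFun v := ⟨⟨v.1, by rw [v.2]; exact hk⟩, v.2⟩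
  left_inv σ := rfl
  right_inv v := rfl

lemma sum_ball_len {q n k : ℕ} (hk : k ≤ n) (h : Vertex q → ℂ) :
    (∑ σ : Ball q n, if σ.1.length = k then h σ.1 else 0)
      = ∑ v : List.Vector (Fin q) k, h v.1 := by
  classical
  rw [← Finset.sum_filter,
    Finset.sum_subtype (p := fun σ : Ball q n => σ.1.length = k) _ (by simp)
      (fun σ : Ball q n => h σ.1)]
  exact Fintype.sum_equiv (ballEquiv q n k hk) _ _ (fun σ => rfl)

lemma sum_ball_len_const {q n k : ℕ} (hk : k ≤ n) (c : ℂ) :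
    (∑ σ : Ball q n, if σ.1.length = k then c else 0) = (q : ℂ) ^ k * c := by
  rw [sum_ball_len hk (fun _ => c), Finset.sum_const, Finset.card_univ, card_vector,
    Fintype.card_fin, nsmul_eq_mul]
  push_cast
  ring

/-! ### The key sum computation -/

lemma key_sum (q n : ℕ) (hq : 1 ≤ q) (f : ℤ → ℂ) (k l : ℕ) (hk : k ≤ n) (hl : l ≤ k) :
    (∑ σ : Ball q n, ∑ τ : Ball q n, Vc q σ.1 k * btKer f σ.1 τ.1 * Vc q τ.1 l)
      = f ((k : ℤ) - l) := by
  have hq0 : (0 : ℝ) < q := by exact_mod_cast hq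
  set C : ℂ := (((q : ℝ) ^ (-(k : ℝ) / 2) : ℝ) : ℂ) *
      ((((q : ℝ) ^ (-((k - l : ℕ) : ℝ) / 2) : ℝ) : ℂ) * f ((k : ℤ) - l)) *
      (((q : ℝ) ^ (-(l : ℝ) / 2) : ℝ) : ℂ) with hC
  have inner : ∀ σ : Ball q n,
      (∑ τ : Ball q n, Vc q σ.1 k * btKer f σ.1 τ.1 * Vc q τ.1 l)
        = if σ.1.length = k then C else 0 := by
    intro σ
    by_cases hσ : σ.1.length = k
    · rw [if_pos hσ]
      have hτ0len : (σ.1.drop (k - l)).length = l := by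
        rw [List.length_drop, hσ]; omega
      set τ0 : Ball q n := ⟨σ.1.drop (k - l), by rw [hτ0len]; omega⟩ with hτ0
      rw [Finset.sum_eq_single τ0]
      · have hsuf : τ0.1 <:+ σ.1 := List.drop_suffix _ _
        have hcomp : Comp σ.1 τ0.1 := Or.inr hsuf
        have htd : tdist σ.1 τ0.1 = k - l := by
          rw [tdist_of_suffix hsuf, hτ0len, hσ]
        have hlen : (σ.1.length : ℤ) - (τ0.1.length : ℤ) = (k : ℤ) - l := by
          rw [hσ, hτ0len]
        rw [hC]
        unfold Vc btKer
        rw [if_pos hσ, if_pos hτ0len, if_pos hcomp, htd, hlen]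
      · intro τ _ hτ
        by_cases hτl : τ.1.length = l
        · have hnc : ¬ Comp σ.1 τ.1 := by
            intro hc
            apply hτ
            have hsuf : τ.1 <:+ σ.1 := by
              rcases hc with h | h
              · have hle := h.length_le
                have heq : σ.1 = τ.1 := h.eq_of_length (by omega)
                rw [heq]
              · exact h
            have hdrop := suffix_eq_drop hsuf
            apply Subtype.ext
            rw [hdrop, hσ, hτl]
          unfold btKer
          rw [if_neg hnc]
          ring
        · have : Vc q τ.1 l = 0 := by unfold Vc; rw [if_neg hτl]
          rw [this, mul_zero]
      · intro h
        exact absurd (Finset.mem_univ _) h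
    · rw [if_neg hσ]
      have : Vc q σ.1 k = 0 := by unfold Vc; rw [if_neg hσ]
      simp [this]
  rw [Finset.sum_congr rfl (fun σ _ => inner σ), sum_ball_len_const hk C]
  have hr : ((q : ℝ) ^ k) * ((q : ℝ) ^ (-(k : ℝ) / 2)) * ((q : ℝ) ^ (-((k - l : ℕ) : ℝ) / 2))
      * ((q : ℝ) ^ (-(l : ℝ) / 2)) = 1 := by
    rw [← Real.rpow_natCast (q : ℝ) k, ← Real.rpow_add hq0, ← Real.rpow_add hq0,
      ← Real.rpow_add hq0,
      show (k : ℝ) + (-(k : ℝ) / 2) + (-((k - l : ℕ) : ℝ) / 2) + (-(l : ℝ) / 2) = 0 by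
        push_cast [Nat.cast_sub hl]; ring,
      Real.rpow_zero]
  have hC2 : (q : ℂ) ^ k * C =
      ((((q : ℝ) ^ k) * ((q : ℝ) ^ (-(k : ℝ) / 2)) * ((q : ℝ) ^ (-((k - l : ℕ) : ℝ) / 2))
        * ((q : ℝ) ^ (-(l : ℝ) / 2)) : ℝ) : ℂ) * f ((k : ℤ) - l) := by
    rw [hC]; push_cast; ring

  rw [hC2, hr]
  simp

/-! ### Matrix identities -/

lemma VhV_eq_one (q n : ℕ) (hq : 1 ≤ q) : (Vm q n)ᴴ * (Vm q n) = 1 := by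
  have hq0 : (0 : ℝ) < q := by exact_mod_cast hq
  ext k l
  rw [Matrix.mul_apply]
  simp only [Matrix.conjTranspose_apply, Vm, star_Vc]
  by_cases hkl : k = l
  · subst hkl
    have hterm : ∀ σ : Ball q n, Vc q σ.1 (k : ℕ) * Vc q σ.1 (k : ℕ)
        = if σ.1.length = (k : ℕ) then (((q : ℝ) ^ (-((k : ℕ) : ℝ)) : ℝ) : ℂ) else 0 := by
      intro σ
      unfold Vc
      split
      · rw [← Complex.ofReal_mul, ← Real.rpow_add hq0]
        norm_num
      · rw [mul_zero]
    rw [Finset.sum_congr rfl (fun σ _ => hterm σ),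
      sum_ball_len_const (Nat.lt_succ_iff.mp k.isLt) _]
    have : ((q : ℝ) ^ (k : ℕ)) * ((q : ℝ) ^ (-((k : ℕ) : ℝ))) = 1 := by
      rw [← Real.rpow_natCast (q : ℝ) (k : ℕ), ← Real.rpow_add hq0]
      norm_num
    rw [Matrix.one_apply_eq]
    rw [show ((q : ℂ) ^ (k : ℕ) * ((q : ℝ) ^ (-((k : ℕ) : ℝ)) : ℝ) : ℂ)
        = ((((q : ℝ) ^ (k : ℕ)) * ((q : ℝ) ^ (-((k : ℕ) : ℝ))) : ℝ) : ℂ) by push_cast; ring,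
      this]
    norm_num
  · have hne : (k : ℕ) ≠ (l : ℕ) := fun h => hkl (Fin.ext h)
    have hterm : ∀ σ : Ball q n, Vc q σ.1 (k : ℕ) * Vc q σ.1 (l : ℕ) = 0 := by
      intro σ
      unfold Vc
      by_cases h1 : σ.1.length = (k : ℕ)
      · rw [if_neg (by omega : ¬ σ.1.length = (l : ℕ)), mul_zero]
      · rw [if_neg h1, zero_mul]
    rw [Finset.sum_congr rfl (fun σ _ => hterm σ), Finset.sum_const_zero,
      Matrix.one_apply_ne hkl]

lemma toep_factor (q n : ℕ) (hq : 1 ≤ q) (f : ℤ → ℂ) :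
    toepMat n f = (Vm q n)ᴴ * btMat q n f * Vm q n := by
  ext k l
  rw [Matrix.mul_apply]
  simp only [Matrix.mul_apply, Matrix.conjTranspose_apply, Vm, star_Vc, btMat,
    Finset.sum_mul]
  rw [Finset.sum_comm]
  rcases le_or_gt (l : ℕ) (k : ℕ) with h | h
  · exact (key_sum q n hq f (k : ℕ) (l : ℕ) (Nat.lt_succ_iff.mp k.isLt) h).symm
  · have flip : ∀ σ τ : Ball q n,
        Vc q σ.1 (k : ℕ) * btKer f σ.1 τ.1 * Vc q τ.1 (l : ℕ)
          = Vc q τ.1 (l : ℕ) * btKer (fun m => f (-m)) τ.1 σ.1 * Vc q σ.1 (k : ℕ) := by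
      intro σ τ
      rw [btKer_flip f σ.1 τ.1]
      ring
    calc toepMat n f k l
        = (fun m => f (-m)) ((l : ℤ) - (k : ℤ)) := by
          unfold toepMat; congr 1; ring
      _ = ∑ τ : Ball q n, ∑ σ : Ball q n,
            Vc q τ.1 (l : ℕ) * btKer (fun m => f (-m)) τ.1 σ.1 * Vc q σ.1 (k : ℕ) :=
          (key_sum q n hq (fun m => f (-m)) (l : ℕ) (k : ℕ)
            (Nat.lt_succ_iff.mp l.isLt) h.le).symm
      _ = ∑ σ : Ball q n, ∑ τ : Ball q n,
            Vc q τ.1 (l : ℕ) * btKer (fun m => f (-m)) τ.1 σ.1 * Vc q σ.1 (k : ℕ) :=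
          Finset.sum_comm
      _ = ∑ σ : Ball q n, ∑ τ : Ball q n,
            Vc q σ.1 (k : ℕ) * btKer f σ.1 τ.1 * Vc q τ.1 (l : ℕ) := by
          refine Finset.sum_congr rfl fun σ _ => Finset.sum_congr rfl fun τ _ => ?_
          rw [flip σ τ]

open scoped Matrix.Norms.L2Operator in
/-- The ℓ²-operator norm of the standard Toeplitz matrix `T_n(f)`
is dominated by that of the truncated branching-Toeplitz matrix `Γ_q^{(n)}[f]`. -/
theorem toepMat_norm_le_btMat_norm (q n : ℕ) (hq : 2 ≤ q) (hn : 1 ≤ n) (f : ℤ → ℂ) :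
    ‖Matrix.toEuclideanCLM (𝕜 := ℂ) (toepMat n f)‖ ≤
      ‖Matrix.toEuclideanCLM (𝕜 := ℂ) (btMat q n f)‖ := by
  have hq1 : 1 ≤ q := le_trans one_le_two hq
  rw [← Matrix.cstar_norm_def, ← Matrix.cstar_norm_def]
  have hfact := toep_factor q n hq1 f
  have h1 := VhV_eq_one q n hq1
  have hV2 : ‖Vm q n‖ * ‖Vm q n‖ = 1 := by
    rw [← Matrix.l2_opNorm_conjTranspose_mul_self, h1, Matrix.cstar_norm_def, _root_.map_one,
      ContinuousLinearMap.one_def]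
    exact ContinuousLinearMap.norm_id
  have hV : ‖Vm q n‖ = 1 := by
    rcases mul_self_eq_one_iff.mp hV2 with h | h
    · exact h
    · nlinarith [norm_nonneg (Vm q n)]
  calc ‖toepMat n f‖ = ‖(Vm q n)ᴴ * btMat q n f * Vm q n‖ := by rw [hfact]
    _ ≤ ‖(Vm q n)ᴴ * btMat q n f‖ * ‖Vm q n‖ := Matrix.l2_opNorm_mul _ _
    _ ≤ ‖(Vm q n)ᴴ‖ * ‖btMat q n f‖ * ‖Vm q n‖ :=
        mul_le_mul_of_nonneg_right (Matrix.l2_opNorm_mul _ _) (norm_nonneg _)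
    _ = ‖btMat q n f‖ := by rw [Matrix.l2_opNorm_conjTranspose, hV]; ring
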